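/- Let n ≥ 2 be an integer and t a positive integer dividing 2n, and let x, y be the standard generators of the generalized quaternion group Q_{4n}. Then the subgroup ⟨x^t⟩ of Q_{4n} is a perfect code of Q_{4n} if and only if 2n/t is odd. -/

import Mathlib

/-- The Cayley graph of a group `G` with connection set `S`: distinct vertices `x`, `y`
are adjacent iff `y * x⁻¹ ∈ S` (for inverse-closed `S` this relation is symmetric). -/
def cayley (G : Type*) [Group G] (S : Set G) : SimpleGraph G :=
  SimpleGraph.fromRel (fun x y => y * x⁻¹ ∈ S)

/-- `C` is a perfect code in the graph `Γ`: `C` is an independent set and every vertex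
outside `C` is adjacent to exactly one vertex of `C`. -/
def IsPerfectCode {V : Type*} (Γ : SimpleGraph V) (C : Set V) : Prop :=
  (∀ u ∈ C, ∀ v ∈ C, ¬ Γ.Adj u v) ∧ ∀ v ∉ C, ∃! u, u ∈ C ∧ Γ.Adj v u

/-- `C` is a perfect code of the group `G`: there is an inverse-closed `S ⊆ G` with
`1 ∉ S` such that `C` is a perfect code in `Cay(G, S)`. -/
def IsPerfectCodeOfGroup (G : Type*) [Group G] (C : Set G) : Prop :=
  ∃ S : Set G, S⁻¹ = S ∧ (1 : G) ∉ S ∧ IsPerfectCode (cayley G S) C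

namespace QuaternionPC

open QuaternionGroup Subgroup

lemma a_zpow {n : ℕ} (i : ZMod (2*n)) (k : ℤ) :
    (a i : QuaternionGroup n) ^ k = a ((k : ZMod (2*n)) * i) := by
  induction k using Int.induction_on with
  | zero => simp
  | succ k ih => rw [zpow_add_one, ih]; simp; ring_nf
  | pred k ih => rw [zpow_sub_one, ih]; show _ * a (-i) = _; simp; ring_nf

lemma xa_not_mem {n t : ℕ} {j : ZMod (2*n)} :
    (xa j : QuaternionGroup n) ∉ zpowers ((a 1 : QuaternionGroup n) ^ t) := by
  rw [a_one_pow, mem_zpowers_iff]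
  rintro ⟨k, hk⟩
  rw [a_zpow] at hk
  cases hk

lemma mem_zpow_iff {n t : ℕ} (hn : 0 < n) (htdvd : t ∣ 2*n) (i : ZMod (2*n)) :
    (a i : QuaternionGroup n) ∈ zpowers ((a 1 : QuaternionGroup n) ^ t) ↔
      ZMod.castHom htdvd (ZMod t) i = 0 := by
  haveI : NeZero (2*n) := ⟨by omega⟩
  rw [a_one_pow, mem_zpowers_iff]
  constructor
  · rintro ⟨k, hk⟩
    rw [a_zpow] at hk
    have hik : ((k : ZMod (2*n)) * ((t:ℕ) : ZMod (2*n))) = i := by injection hk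
    rw [← hik, map_mul, map_natCast, ZMod.natCast_self, mul_zero]
  · intro h
    have hv : ((i.val : ℕ) : ZMod t) = 0 := by
      rw [ZMod.natCast_val, ← ZMod.castHom_apply (h := htdvd), h]
    obtain ⟨c, hc⟩ := (ZMod.natCast_eq_zero_iff _ _).mp hv
    refine ⟨(c : ℤ), ?_⟩
    rw [a_zpow]
    congr 1
    have : i = ((i.val : ℕ) : ZMod (2*n)) := (ZMod.natCast_zmod_val i).symm
    rw [this, hc]
    push_cast
    ring

def qrho (n t u : ℕ) (r : ZMod t) : ZMod (2*n) :=
  if r.val < u then ((r.val : ℕ) : ZMod (2*n))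
  else if r.val = u then ((n : ℕ) : ZMod (2*n))
  else ((2*n - t + r.val : ℕ) : ZMod (2*n))

def qrho' (n t u : ℕ) (r : ZMod t) : ZMod (2*n) :=
  if r.val < u then ((r.val : ℕ) : ZMod (2*n))
  else ((n + (r.val - u) : ℕ) : ZMod (2*n))

variable {n t u l : ℕ}

lemma pi_qrho (hu : 0 < u) (ht2 : t = 2*u) (hnl : n = 2*u*l + u) (htdvd : t ∣ 2*n)
    (r : ZMod t) : ZMod.castHom htdvd (ZMod t) (qrho n t u r) = r := by
  haveI : NeZero t := ⟨by omega⟩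
  have hnat : (n:ℕ) = t*l + u := by subst ht2 hnl; ring
  have h2n : 2*n = t*(2*l) + t := by rw [hnl, ht2]; ring
  unfold qrho
  split_ifs with h1 h2
  · rw [map_natCast, ZMod.natCast_zmod_val]
  · rw [map_natCast, hnat]
    push_cast
    rw [ZMod.natCast_self, zero_mul, zero_add, ← h2, ZMod.natCast_zmod_val]
  · rw [map_natCast]
    have hrv : r.val < t := ZMod.val_lt r
    rw [show 2*n - t + r.val = t*(2*l) + r.val by omega]
    push_cast
    rw [ZMod.natCast_self, zero_mul, zero_add, ZMod.natCast_zmod_val]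

lemma pi_qrho' (hu : 0 < u) (ht2 : t = 2*u) (hnl : n = 2*u*l + u) (htdvd : t ∣ 2*n)
    (r : ZMod t) : ZMod.castHom htdvd (ZMod t) (qrho' n t u r) = r := by
  haveI : NeZero t := ⟨by omega⟩
  have hnat : (n:ℕ) = t*l + u := by subst ht2 hnl; ring
  unfold qrho'
  split_ifs with h1
  · rw [map_natCast, ZMod.natCast_zmod_val]
  · rw [map_natCast]
    have hrv : r.val < t := ZMod.val_lt r
    rw [show n + (r.val - u) = t*l + r.val by omega]
    push_cast
    rw [ZMod.natCast_self, zero_mul, zero_add, ZMod.natCast_zmod_val]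

lemma qrho_neg (hu : 0 < u) (ht2 : t = 2*u) (hnl : n = 2*u*l + u)
    (r : ZMod t) (hr : r ≠ 0) : qrho n t u (-r) = - qrho n t u r := by
  haveI : NeZero t := ⟨by omega⟩
  haveI : NeZero r := ⟨hr⟩
  have hvneg : (-r).val = t - r.val := ZMod.val_neg_of_ne_zero r
  have hrv0 : r.val ≠ 0 := fun h => hr (by rwa [ZMod.val_eq_zero] at h)
  have hrvt : r.val < t := ZMod.val_lt r
  have h2n : 2*n = t*(2*l) + t := by rw [hnl, ht2]; ring
  have htle : t ≤ 2*n := by omega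
  have hms : ∀ a : ℕ, a ≤ 2*n → ((2*n - a : ℕ) : ZMod (2*n)) = -((a:ℕ) : ZMod (2*n)) := by
    intro a ha
    rw [Nat.cast_sub ha, ZMod.natCast_self, zero_sub]
  simp only [qrho, hvneg]
  rcases lt_trichotomy r.val u with h1 | h1 | h1
  · rw [if_neg (by omega), if_neg (by omega), if_pos h1]
    rw [show 2*n - t + (t - r.val) = 2*n - r.val by omega, hms r.val (by omega)]
  · rw [if_neg (by omega), if_pos (by omega), if_neg (by omega), if_pos h1]
    rw [← hms n (by omega), show 2*n - n = n by omega]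
  · rw [if_pos (by omega), if_neg (by omega), if_neg (by omega)]
    rw [← hms (2*n - t + r.val) (by omega)]
    exact congrArg _ (by omega)

lemma qrho'_shift (hu : 0 < u) (ht2 : t = 2*u) (hnl : n = 2*u*l + u)
    (r : ZMod t) :
    qrho' n t u (r + ((u:ℕ) : ZMod t)) = ((n:ℕ) : ZMod (2*n)) + qrho' n t u r := by
  haveI : NeZero t := ⟨by omega⟩
  have hut : u < t := by omega
  have hrvt : r.val < t := ZMod.val_lt r
  have huv : ((u:ℕ) : ZMod t).val = u := ZMod.val_cast_of_lt hut
  have hvadd : (r + ((u:ℕ) : ZMod t)).val = (r.val + u) % t := by rw [ZMod.val_add, huv]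
  have hnn : (((n:ℕ) : ZMod (2*n)) + ((n:ℕ) : ZMod (2*n))) = 0 := by
    rw [← Nat.cast_add, ← two_mul, ZMod.natCast_self]
  rcases lt_or_ge r.val u with h1 | h1
  · have hmod : (r.val + u) % t = r.val + u := Nat.mod_eq_of_lt (by omega)
    simp only [qrho', hvadd, hmod]
    rw [if_neg (by omega), if_pos h1]
    rw [show r.val + u - u = r.val by omega]
    push_cast
    ring
  · have hmod : (r.val + u) % t = r.val - u := by
      rw [Nat.mod_eq_sub_mod (by omega), Nat.mod_eq_of_lt (by omega)]
      omega
    simp only [qrho', hvadd, hmod]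
    rw [if_pos (by omega), if_neg (by omega)]
    have hsplit : ((n + (r.val - u) : ℕ) : ZMod (2*n))
        = ((n:ℕ):ZMod (2*n)) + ((r.val - u : ℕ) : ZMod (2*n)) := by push_cast; ring
    rw [hsplit, ← add_assoc, hnn, zero_add]

lemma suff (hn : 2 ≤ n) (hu : 0 < u) (ht2 : t = 2*u) (hnl : n = 2*u*l + u)
    (htdvd : t ∣ 2*n) :
    IsPerfectCodeOfGroup (QuaternionGroup n)
      ((Subgroup.zpowers ((QuaternionGroup.a (1 : ZMod (2 * n))) ^ t)) :
        Set (QuaternionGroup n)) := by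
  haveI : NeZero t := ⟨by omega⟩
  haveI : NeZero (2*n) := ⟨by omega⟩
  set π := ZMod.castHom htdvd (ZMod t) with hπdef
  set S : Set (QuaternionGroup n) :=
    {g | (∃ r : ZMod t, r ≠ 0 ∧ g = a (qrho n t u r)) ∨
         (∃ r : ZMod t, g = xa (qrho' n t u r))} with hSdef
  have hSa : ∀ j : ZMod (2*n), a j ∈ S ↔ ∃ r : ZMod t, r ≠ 0 ∧ j = qrho n t u r := by
    intro j
    constructor
    · rintro (⟨r, hr, he⟩ | ⟨r, he⟩)
      · exact ⟨r, hr, by injection he⟩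
      · cases he
    · rintro ⟨r, hr, rfl⟩
      exact Or.inl ⟨r, hr, rfl⟩
  have hSxa : ∀ j : ZMod (2*n), xa j ∈ S ↔ ∃ r : ZMod t, j = qrho' n t u r := by
    intro j
    constructor
    · rintro (⟨r, hr, he⟩ | ⟨r, he⟩)
      · cases he
      · exact ⟨r, by injection he⟩
    · rintro ⟨r, rfl⟩
      exact Or.inr ⟨r, rfl⟩
  have hcl : ∀ g ∈ S, g⁻¹ ∈ S := by
    rintro g (⟨r, hr, rfl⟩ | ⟨r, rfl⟩)
    · refine Or.inl ⟨-r, neg_ne_zero.mpr hr, ?_⟩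
      show a (-(qrho n t u r)) = a (qrho n t u (-r))
      rw [qrho_neg hu ht2 hnl r hr]
    · refine Or.inr ⟨r + ((u:ℕ) : ZMod t), ?_⟩
      show xa (((n:ℕ) : ZMod (2*n)) + qrho' n t u r) = xa (qrho' n t u (r + ((u:ℕ) : ZMod t)))
      rw [qrho'_shift hu ht2 hnl r]
  have hSinv : S⁻¹ = S := by
    ext g
    rw [Set.mem_inv]
    constructor
    · intro hg
      have := hcl _ hg
      rwa [inv_inv] at this
    · intro hg
      exact hcl _ hg
  have h1S : (1 : QuaternionGroup n) ∉ S := by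
    rintro (⟨r, hr, he⟩ | ⟨r, he⟩)
    · rw [QuaternionGroup.one_def] at he
      have h0 : (0 : ZMod (2*n)) = qrho n t u r := by injection he
      apply hr
      rw [← pi_qrho hu ht2 hnl htdvd r, ← h0, map_zero]
    · rw [QuaternionGroup.one_def] at he
      cases he
  have hCa : ∀ i : ZMod (2*n), ((a i : QuaternionGroup n) ∈
      ((Subgroup.zpowers ((a (1 : ZMod (2*n))) ^ t)) : Set (QuaternionGroup n))) ↔ π i = 0 := by
    intro i
    rw [SetLike.mem_coe]
    exact mem_zpow_iff (by omega) htdvd i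
  have hadj_iff : ∀ v w : QuaternionGroup n,
      (cayley (QuaternionGroup n) S).Adj v w ↔ v ≠ w ∧ (w * v⁻¹ ∈ S ∨ v * w⁻¹ ∈ S) :=
    fun v w => SimpleGraph.fromRel_adj _ v w
  refine ⟨S, hSinv, h1S, ?_, ?_⟩
  · intro g hg g' hg' hadj
    rw [hadj_iff] at hadj
    obtain ⟨hne, hor⟩ := hadj
    obtain ⟨i, rfl⟩ : ∃ i, g = a i := by
      cases g with
      | a i => exact ⟨i, rfl⟩
      | xa i => exact absurd (SetLike.mem_coe.mp hg) xa_not_mem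
    obtain ⟨j, rfl⟩ : ∃ j, g' = a j := by
      cases g' with
      | a j => exact ⟨j, rfl⟩
      | xa j => exact absurd (SetLike.mem_coe.mp hg') xa_not_mem
    have hπi : π i = 0 := (hCa i).mp hg
    have hπj : π j = 0 := (hCa j).mp hg'
    have key : ∀ x y : ZMod (2*n), π x = 0 → π y = 0 →
        (a x * (a y)⁻¹ : QuaternionGroup n) ∈ S → False := by
      intro x y hx hy hmem
      have hx' : (a x * (a y)⁻¹ : QuaternionGroup n) = a (x + -y) := rfl
      rw [hx', hSa] at hmem
      obtain ⟨r, hr, hxy⟩ := hmem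
      apply hr
      rw [← pi_qrho hu ht2 hnl htdvd r, ← hxy, map_add, map_neg, hx, hy, neg_zero, add_zero]
    rcases hor with h | h
    · exact key _ _ hπj hπi h
    · exact key _ _ hπi hπj h
  · intro v hv
    cases v with
    | a i =>
      have hπi : π i ≠ 0 := fun h0 => hv ((hCa i).mpr h0)
      have hmem0 : (a (i - qrho n t u (π i)) : QuaternionGroup n) ∈
          ((Subgroup.zpowers ((a (1 : ZMod (2*n))) ^ t)) : Set (QuaternionGroup n)) :=
        (hCa _).mpr (by rw [map_sub, pi_qrho hu ht2 hnl htdvd, sub_self])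
      refine ⟨a (i - qrho n t u (π i)), ⟨hmem0, ?_⟩, ?_⟩
      · rw [hadj_iff]
        refine ⟨fun he => hv (he ▸ hmem0), Or.inr ?_⟩
        have hx' : (a i * (a (i - qrho n t u (π i)))⁻¹ : QuaternionGroup n)
            = a (i + -(i - qrho n t u (π i))) := rfl
        rw [hx', hSa]
        exact ⟨π i, hπi, by ring⟩
      · rintro u' ⟨hu'C, hu'adj⟩
        obtain ⟨j, rfl⟩ : ∃ j, u' = a j := by
          cases u' with
          | a j => exact ⟨j, rfl⟩
          | xa j => exact absurd (SetLike.mem_coe.mp hu'C) xa_not_mem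
        have hπj : π j = 0 := (hCa j).mp hu'C
        rw [hadj_iff] at hu'adj
        obtain ⟨hne, hor⟩ := hu'adj
        have hS2 : (a (i + -j) : QuaternionGroup n) ∈ S := by
          rcases hor with h | h
          · have hinv := hcl _ h
            have he : ((a j * (a i)⁻¹ : QuaternionGroup n))⁻¹ = a (i + -j) := by
              show a (-(j + -i)) = a (i + -j)
              exact congrArg _ (by ring)
            rwa [he] at hinv
          · exact h
        rw [hSa] at hS2
        obtain ⟨r, hr, hijr⟩ := hS2
        have hrπ : r = π i := by
          rw [← pi_qrho hu ht2 hnl htdvd r, ← hijr, map_add, map_neg, hπj, neg_zero, add_zero]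
        subst hrπ
        congr 1
        linear_combination -hijr
    | xa i =>
      have hnn : (((n:ℕ) : ZMod (2*n)) + ((n:ℕ) : ZMod (2*n))) = 0 := by
        rw [← Nat.cast_add, ← two_mul, ZMod.natCast_self]
      have hmem0 : (a (i - qrho' n t u (π i)) : QuaternionGroup n) ∈
          ((Subgroup.zpowers ((a (1 : ZMod (2*n))) ^ t)) : Set (QuaternionGroup n)) :=
        (hCa _).mpr (by rw [map_sub, pi_qrho' hu ht2 hnl htdvd, sub_self])
      refine ⟨a (i - qrho' n t u (π i)), ⟨hmem0, ?_⟩, ?_⟩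
      · rw [hadj_iff]
        refine ⟨?_, Or.inr ?_⟩
        · intro he
          cases he
        have hx' : (xa i * (a (i - qrho' n t u (π i)))⁻¹ : QuaternionGroup n)
            = xa (i + -(i - qrho' n t u (π i))) := rfl
        rw [hx', hSxa]
        exact ⟨π i, by ring⟩
      · rintro u' ⟨hu'C, hu'adj⟩
        obtain ⟨j, rfl⟩ : ∃ j, u' = a j := by
          cases u' with
          | a j => exact ⟨j, rfl⟩
          | xa j => exact absurd (SetLike.mem_coe.mp hu'C) xa_not_mem
        have hπj : π j = 0 := (hCa j).mp hu'C
        rw [hadj_iff] at hu'adj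
        obtain ⟨hne, hor⟩ := hu'adj
        have hS2 : (xa (i + -j) : QuaternionGroup n) ∈ S := by
          rcases hor with h | h
          · have hinv := hcl _ h
            have he : ((a j * (xa i)⁻¹ : QuaternionGroup n))⁻¹ = xa (i + -j) := by
              show xa (((n:ℕ) : ZMod (2*n)) + ((((n:ℕ) : ZMod (2*n)) + i) - j)) = xa (i + -j)
              exact congrArg _ (by linear_combination hnn)
            rwa [he] at hinv
          · exact h
        rw [hSxa] at hS2
        obtain ⟨r, hijr⟩ := hS2
        have hrπ : r = π i := by
          rw [← pi_qrho' hu ht2 hnl htdvd r, ← hijr, map_add, map_neg, hπj, neg_zero, add_zero]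
        subst hrπ
        congr 1
        linear_combination -hijr

lemma necc {n t : ℕ} (hn : 2 ≤ n) (ht : 0 < t) (htn : t ∣ n) (htdvd : t ∣ 2*n)
    (h : IsPerfectCodeOfGroup (QuaternionGroup n)
      ((Subgroup.zpowers ((a (1 : ZMod (2*n))) ^ t)) : Set (QuaternionGroup n))) : False := by
  haveI : NeZero (2*n) := ⟨by omega⟩
  haveI : NeZero t := ⟨ht.ne'⟩
  obtain ⟨S, hSinv, h1S, hindep, hex⟩ := h
  have hinv : ∀ s ∈ S, s⁻¹ ∈ S := by
    intro s hs
    rw [← hSinv]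
    exact Set.inv_mem_inv.mpr hs
  have hadj_iff : ∀ v w : QuaternionGroup n,
      (cayley (QuaternionGroup n) S).Adj v w ↔ v ≠ w ∧ (w * v⁻¹ ∈ S ∨ v * w⁻¹ ∈ S) :=
    fun v w => SimpleGraph.fromRel_adj _ v w
  have hnn : (((n:ℕ) : ZMod (2*n)) + ((n:ℕ) : ZMod (2*n))) = 0 := by
    rw [← Nat.cast_add, ← two_mul, ZMod.natCast_self]
  have hyC : (xa 0 : QuaternionGroup n) ∉
      ((Subgroup.zpowers ((a (1 : ZMod (2*n))) ^ t)) : Set (QuaternionGroup n)) :=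
    fun hc => xa_not_mem (SetLike.mem_coe.mp hc)
  obtain ⟨w, ⟨hwC, hwadj⟩, huniq⟩ := hex _ hyC
  obtain ⟨j, rfl⟩ : ∃ j, w = a j := by
    cases w with
    | a j => exact ⟨j, rfl⟩
    | xa j => exact absurd (SetLike.mem_coe.mp hwC) xa_not_mem
  have hπj : ZMod.castHom htdvd (ZMod t) j = 0 :=
    (mem_zpow_iff (by omega) htdvd j).mp (SetLike.mem_coe.mp hwC)
  rw [hadj_iff] at hwadj
  obtain ⟨hne, hor⟩ := hwadj
  have hs : (xa (0 + -j) : QuaternionGroup n) ∈ S := by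
    rcases hor with h | h
    · have hmem := hinv _ h
      have he : ((a j * (xa 0)⁻¹ : QuaternionGroup n))⁻¹ = xa (0 + -j) := by
        show xa (((n:ℕ) : ZMod (2*n)) + ((((n:ℕ) : ZMod (2*n)) + 0) - j)) = xa (0 + -j)
        exact congrArg _ (by linear_combination hnn)
      rwa [he] at hmem
    · exact h
  have hmem2 : (a (((n:ℕ) : ZMod (2*n)) + j) : QuaternionGroup n) ∈
      ((Subgroup.zpowers ((a (1 : ZMod (2*n))) ^ t)) : Set (QuaternionGroup n)) :=
    SetLike.mem_coe.mpr ((mem_zpow_iff (by omega) htdvd _).mpr (by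
      rw [map_add, map_natCast, hπj, add_zero]
      exact (ZMod.natCast_eq_zero_iff _ _).mpr htn))
  have hadj2 : (cayley (QuaternionGroup n) S).Adj (xa 0) (a (((n:ℕ) : ZMod (2*n)) + j)) := by
    rw [hadj_iff]
    refine ⟨?_, Or.inr ?_⟩
    · intro he
      cases he
    · have hmem := hinv _ hs
      have he : ((xa (0 + -j) : QuaternionGroup n))⁻¹
          = (xa 0 * (a (((n:ℕ) : ZMod (2*n)) + j))⁻¹ : QuaternionGroup n) := by
        show xa (((n:ℕ) : ZMod (2*n)) + (0 + -j)) = xa (0 + -(((n:ℕ) : ZMod (2*n)) + j))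
        exact congrArg _ (by linear_combination hnn)
      rwa [he] at hmem
  have heq := huniq _ ⟨hmem2, hadj2⟩
  have hnj : ((n:ℕ) : ZMod (2*n)) + j = j := by injection heq
  have hn0 : ((n:ℕ) : ZMod (2*n)) = 0 := by
    have := add_eq_right.mp hnj
    exact this
  have hdvd := (ZMod.natCast_eq_zero_iff n (2*n)).mp hn0
  have := Nat.le_of_dvd (by omega) hdvd
  omega

end QuaternionPC

/-- In the generalized quaternion group `Q_{4n}` (`n ≥ 2`), for a positive divisor `t`
of `2n`, the subgroup `⟨x^t⟩` is a perfect code of `Q_{4n}` iff `2n/t` is odd. -/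
theorem quaternion_cyclic_subgroup_perfect_code_iff (n : ℕ) (hn : 2 ≤ n)
    (t : ℕ) (ht : 0 < t) (htdvd : t ∣ 2 * n) :
    IsPerfectCodeOfGroup (QuaternionGroup n)
        ((Subgroup.zpowers ((QuaternionGroup.a (1 : ZMod (2 * n))) ^ t)) : Set (QuaternionGroup n)) ↔
      Odd (2 * n / t) := by
  constructor
  · intro h
    by_contra hodd
    rw [Nat.not_odd_iff_even] at hodd
    obtain ⟨r, hr⟩ := hodd
    have htm : t * (2*n/t) = 2*n := Nat.mul_div_cancel' htdvd
    have h2 : t * (r + r) = 2*n := by rw [← hr]; exact htm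
    have hsplit : t * (r + r) = t*r + t*r := by ring
    have htn : t ∣ n := ⟨r, by omega⟩
    exact QuaternionPC.necc hn ht htn htdvd h
  · intro hodd
    obtain ⟨l, hl⟩ := hodd
    have htm : t * (2*n/t) = 2*n := Nat.mul_div_cancel' htdvd
    have h2 : t * (2*l+1) = 2*n := by rw [← hl]; exact htm
    obtain ⟨u, hu⟩ : ∃ u, t = 2*u := by
      rcases Nat.even_or_odd t with he | ho
      · obtain ⟨u, hu⟩ := he
        exact ⟨u, by omega⟩
      · exfalso
        have hoo : Odd (t * (2*l+1)) := ho.mul ⟨l, by ring⟩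
        rw [h2] at hoo
        obtain ⟨k, hk⟩ := hoo
        omega
    have hu0 : 0 < u := by omega
    rw [hu] at h2
    have hnl : n = 2*u*l + u := by
      have hr : (2*u) * (2*l+1) = 2*(2*u*l + u) := by ring
      omega
    exact QuaternionPC.suff hn hu0 hu hnl htdvd
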